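/- For every graph F, there exists a graph G containing F as an induced subgraph such that G has the strong parity property. (Hence the strong parity property admits no forbidden induced subgraph characterization.) -/

import Mathlib

open SimpleGraph

/-- The degree of `v` in `H`, defined as the cardinality of its neighbor set. -/
noncomputable def edeg {V : Type*} (H : SimpleGraph V) (v : V) : ℕ := (H.neighborSet v).ncard

/-- A factor of `G`: a spanning subgraph with all degrees at least 1. -/
def IsFactor {V : Type*} (G H : SimpleGraph V) : Prop :=
  H ≤ G ∧ ∀ v, 1 ≤ edeg H v

/-- An `X`-parity-factor of `G`: a factor whose odd-degree vertices are exactly `X`. -/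
def IsParityFactor {V : Type*} (G H : SimpleGraph V) (X : Set V) : Prop :=
  IsFactor G H ∧ ∀ v, (Odd (edeg H v) ↔ v ∈ X)

/-- `G` has the strong parity property if every even-sized vertex subset
admits an `X`-parity-factor. -/
def StrongParity {V : Type*} (G : SimpleGraph V) : Prop :=
  ∀ X : Set V, Even X.ncard → ∃ H, IsParityFactor G H X

set_option linter.unusedSectionVars false


def mkJ (L : List (Fin 4 × Fin 4)) : SimpleGraph (Fin 4) :=
  SimpleGraph.fromRel (fun i j => (i, j) ∈ L)

instance (L : List (Fin 4 × Fin 4)) : DecidableRel (mkJ L).Adj := fun i j =>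
  decidable_of_iff _ (SimpleGraph.fromRel_adj _ i j).symm

lemma edeg_eq_degree {V : Type*} [Fintype V] (J : SimpleGraph V) [DecidableRel J.Adj] (v : V) :
    edeg J v = J.degree v := by
  rw [edeg, SimpleGraph.degree, SimpleGraph.neighborFinset_def, Set.ncard_eq_toFinset_card']

lemma gadget (t0 t1 t2 t3 : Prop) (hpar : (t0 ↔ t1) ↔ (t2 ↔ t3)) :
    ∃ J : SimpleGraph (Fin 4), ∃ _ : DecidableRel J.Adj, (∀ i, 1 ≤ J.degree i) ∧
      (Odd (J.degree 0) ↔ t0) ∧ (Odd (J.degree 1) ↔ t1) ∧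
      (Odd (J.degree 2) ↔ t2) ∧ (Odd (J.degree 3) ↔ t3) := by
  by_cases h0 : t0 <;> by_cases h1 : t1 <;> by_cases h2 : t2 <;> by_cases h3 : t3 <;>
    [ exact ⟨mkJ [(0,1),(2,3)], inferInstance, by decide,
        iff_of_true (by decide) h0, iff_of_true (by decide) h1,
        iff_of_true (by decide) h2, iff_of_true (by decide) h3⟩;
      (exact absurd hpar (by tauto));
      (exact absurd hpar (by tauto));
      exact ⟨mkJ [(0,2),(2,3),(3,0),(0,1)], inferInstance, by decide,
        iff_of_true (by decide) h0, iff_of_true (by decide) h1,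
        iff_of_false (by decide) h2, iff_of_false (by decide) h3⟩;
      (exact absurd hpar (by tauto));
      exact ⟨mkJ [(0,1),(1,3),(3,0),(0,2)], inferInstance, by decide,
        iff_of_true (by decide) h0, iff_of_false (by decide) h1,
        iff_of_true (by decide) h2, iff_of_false (by decide) h3⟩;
      exact ⟨mkJ [(0,1),(1,2),(2,0),(0,3)], inferInstance, by decide,
        iff_of_true (by decide) h0, iff_of_false (by decide) h1,
        iff_of_false (by decide) h2, iff_of_true (by decide) h3⟩;
      (exact absurd hpar (by tauto));
      (exact absurd hpar (by tauto));
      exact ⟨mkJ [(1,0),(0,3),(3,1),(1,2)], inferInstance, by decide,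
        iff_of_false (by decide) h0, iff_of_true (by decide) h1,
        iff_of_true (by decide) h2, iff_of_false (by decide) h3⟩;
      exact ⟨mkJ [(1,0),(0,2),(2,1),(1,3)], inferInstance, by decide,
        iff_of_false (by decide) h0, iff_of_true (by decide) h1,
        iff_of_false (by decide) h2, iff_of_true (by decide) h3⟩;
      (exact absurd hpar (by tauto));
      exact ⟨mkJ [(2,0),(0,1),(1,2),(2,3)], inferInstance, by decide,
        iff_of_false (by decide) h0, iff_of_false (by decide) h1,
        iff_of_true (by decide) h2, iff_of_true (by decide) h3⟩;
      (exact absurd hpar (by tauto));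
      (exact absurd hpar (by tauto));
      exact ⟨mkJ [(0,1),(1,2),(2,3),(3,0)], inferInstance, by decide,
        iff_of_false (by decide) h0, iff_of_false (by decide) h1,
        iff_of_false (by decide) h2, iff_of_false (by decide) h3⟩ ]




section
variable {α : Type*} [Fintype α]

def bigG (F : SimpleGraph α) : SimpleGraph (α ⊕ Fin 4) where
  Adj u v :=
    match u, v with
    | Sum.inl a, Sum.inl b => F.Adj a b
    | Sum.inl _, Sum.inr _ => True
    | Sum.inr _, Sum.inl _ => True
    | Sum.inr i, Sum.inr j => i ≠ j
  symm := ⟨by rintro (a|i) (b|j) h <;> simp_all <;> [exact F.adj_symm h; exact Ne.symm h]⟩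
  loopless := ⟨by rintro (a|i) h <;> simp_all⟩

def bigEmb (F : SimpleGraph α) : F ↪g bigG F where
  toFun := Sum.inl
  inj' := Sum.inl_injective
  map_rel_iff' := by intro a b; rfl

def bigH (X : Set (α ⊕ Fin 4)) (J : SimpleGraph (Fin 4)) : SimpleGraph (α ⊕ Fin 4) where
  Adj u v :=
    match u, v with
    | Sum.inl a, Sum.inr i => i = 0 ∨ (i = 1 ∧ Sum.inl a ∉ X)
    | Sum.inr i, Sum.inl a => i = 0 ∨ (i = 1 ∧ Sum.inl a ∉ X)
    | Sum.inr i, Sum.inr j => J.Adj i j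
    | _, _ => False
  symm := ⟨by rintro (a|i) (b|j) h <;> simp_all <;> exact J.adj_symm h⟩
  loopless := ⟨by rintro (a|i) h <;> simp_all⟩

lemma bigH_le (F : SimpleGraph α) (X : Set (α ⊕ Fin 4)) (J : SimpleGraph (Fin 4)) :
    bigH X J ≤ bigG F := by
  rintro (a|i) (b|j) h <;> simp_all [bigH, bigG]
  exact J.ne_of_adj h

lemma edeg_inl_mem (X : Set (α ⊕ Fin 4)) (J : SimpleGraph (Fin 4)) (a : α)
    (h : Sum.inl a ∈ X) : edeg (bigH X J) (Sum.inl a) = 1 := by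
  have hns : (bigH X J).neighborSet (Sum.inl a) = {Sum.inr 0} := by
    ext (b|i) <;> simp_all [bigH, SimpleGraph.neighborSet]
  rw [edeg, hns, Set.ncard_singleton]

lemma edeg_inl_not_mem (X : Set (α ⊕ Fin 4)) (J : SimpleGraph (Fin 4)) (a : α)
    (h : Sum.inl a ∉ X) : edeg (bigH X J) (Sum.inl a) = 2 := by
  have hns : (bigH X J).neighborSet (Sum.inl a) = {Sum.inr 0, Sum.inr 1} := by
    ext (b|i) <;> simp_all [bigH, SimpleGraph.neighborSet]
  rw [edeg, hns]
  exact Set.ncard_pair (by simp)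

lemma ns_inr (X : Set (α ⊕ Fin 4)) (J : SimpleGraph (Fin 4)) (i : Fin 4) :
    (bigH X J).neighborSet (Sum.inr i) =
      Sum.inl '' {a | i = 0 ∨ (i = 1 ∧ Sum.inl a ∉ X)} ∪ Sum.inr '' (J.neighborSet i) := by
  ext (b|j) <;> simp [bigH, SimpleGraph.neighborSet]

lemma edeg_inr (X : Set (α ⊕ Fin 4)) (J : SimpleGraph (Fin 4)) [DecidableRel J.Adj] (i : Fin 4) :
    edeg (bigH X J) (Sum.inr i) =
      {a | i = 0 ∨ (i = 1 ∧ Sum.inl a ∉ X)}.ncard + J.degree i := by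
  rw [edeg, ns_inr, Set.ncard_union_eq (by simp [Set.disjoint_left]),
    Set.ncard_image_of_injective _ Sum.inl_injective,
    Set.ncard_image_of_injective _ Sum.inr_injective]
  congr 1
  rw [SimpleGraph.degree, SimpleGraph.neighborFinset_def, Set.ncard_eq_toFinset_card']

lemma edeg_inr0 (X : Set (α ⊕ Fin 4)) (J : SimpleGraph (Fin 4)) [DecidableRel J.Adj] :
    edeg (bigH X J) (Sum.inr 0) = Fintype.card α + J.degree 0 := by
  rw [edeg_inr]
  congr 1
  have : {a : α | (0 : Fin 4) = 0 ∨ ((0 : Fin 4) = 1 ∧ Sum.inl a ∉ X)} = Set.univ := by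
    ext a; simp
  rw [this, Set.ncard_univ, Nat.card_eq_fintype_card]

lemma edeg_inr1 (X : Set (α ⊕ Fin 4)) (J : SimpleGraph (Fin 4)) [DecidableRel J.Adj] :
    edeg (bigH X J) (Sum.inr 1) = {a : α | Sum.inl a ∉ X}.ncard + J.degree 1 := by
  rw [edeg_inr]
  congr 2
  ext a
  simp [show (1:Fin 4) ≠ 0 by decide]

lemma edeg_inr2 (X : Set (α ⊕ Fin 4)) (J : SimpleGraph (Fin 4)) [DecidableRel J.Adj] :
    edeg (bigH X J) (Sum.inr 2) = J.degree 2 := by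
  rw [edeg_inr]
  have : {a : α | (2 : Fin 4) = 0 ∨ ((2 : Fin 4) = 1 ∧ Sum.inl a ∉ X)} = ∅ := by
    ext a; simp [show (2:Fin 4) ≠ 0 by decide, show (2:Fin 4) ≠ 1 by decide]
  rw [this, Set.ncard_empty, zero_add]

lemma edeg_inr3 (X : Set (α ⊕ Fin 4)) (J : SimpleGraph (Fin 4)) [DecidableRel J.Adj] :
    edeg (bigH X J) (Sum.inr 3) = J.degree 3 := by
  rw [edeg_inr]
  have : {a : α | (3 : Fin 4) = 0 ∨ ((3 : Fin 4) = 1 ∧ Sum.inl a ∉ X)} = ∅ := by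
    ext a; simp [show (3:Fin 4) ≠ 0 by decide, show (3:Fin 4) ≠ 1 by decide]
  rw [this, Set.ncard_empty, zero_add]

lemma card_split (X : Set (α ⊕ Fin 4)) :
    X.ncard = {a : α | Sum.inl a ∈ X}.ncard + (Sum.inr ⁻¹' X : Set (Fin 4)).ncard := by
  have hX : X = Sum.inl '' {a : α | Sum.inl a ∈ X} ∪ Sum.inr '' (Sum.inr ⁻¹' X) := by
    ext (a|i) <;> simp
  conv_lhs => rw [hX]
  rw [Set.ncard_union_eq (by simp [Set.disjoint_left]),
    Set.ncard_image_of_injective _ Sum.inl_injective,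
    Set.ncard_image_of_injective _ Sum.inr_injective]

open Classical in
lemma preim_card (X : Set (α ⊕ Fin 4)) :
    (Sum.inr ⁻¹' X : Set (Fin 4)).ncard =
      (if Sum.inr 0 ∈ X then 1 else 0) + (if Sum.inr 1 ∈ X then 1 else 0) +
      (if Sum.inr 2 ∈ X then 1 else 0) + (if (Sum.inr 3 : α ⊕ Fin 4) ∈ X then 1 else 0) := by
  classical
  haveI : Fintype (Sum.inr ⁻¹' X : Set (Fin 4)) := Set.Finite.fintype (Set.toFinite _)
  rw [Set.ncard_eq_toFinset_card']
  have : (Sum.inr ⁻¹' X : Set (Fin 4)).toFinset =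
      Finset.univ.filter (fun i : Fin 4 => (Sum.inr i : α ⊕ Fin 4) ∈ X) := by
    ext i; simp
  rw [this, Finset.card_filter, Fin.sum_univ_four]


lemma iff_helper (P Q D : Prop) (h : D ↔ ¬(P ↔ Q)) : (P ↔ ¬D) ↔ Q := by tauto

set_option maxHeartbeats 1000000 in
lemma strong_bigG (F : SimpleGraph α) : StrongParity (bigG F) := by
  classical
  intro X hX
  set n1 := {a : α | Sum.inl a ∉ X}.ncard with hn1
  have hc : {a : α | Sum.inl a ∈ X}.ncard + n1 = Fintype.card α := by
    rw [hn1]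
    have : {a : α | Sum.inl a ∉ X} = {a : α | Sum.inl a ∈ X}ᶜ := rfl
    rw [this, Set.ncard_add_ncard_compl, Nat.card_eq_fintype_card]
  have he : Even ({a : α | Sum.inl a ∈ X}.ncard +
      ((if Sum.inr 0 ∈ X then 1 else 0) + (if Sum.inr 1 ∈ X then 1 else 0) +
       (if Sum.inr 2 ∈ X then 1 else 0) + (if (Sum.inr 3 : α ⊕ Fin 4) ∈ X then 1 else 0))) := by
    rw [← preim_card, ← card_split]; exact hX
  have hpar : ((¬(Odd (Fintype.card α) ↔ (Sum.inr 0 : α ⊕ Fin 4) ∈ X)) ↔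
      (¬(Odd n1 ↔ (Sum.inr 1 : α ⊕ Fin 4) ∈ X))) ↔
      (((Sum.inr 2 : α ⊕ Fin 4) ∈ X) ↔ ((Sum.inr 3 : α ⊕ Fin 4) ∈ X)) := by
    by_cases m0 : (Sum.inr 0 : α ⊕ Fin 4) ∈ X <;>
    by_cases m1 : (Sum.inr 1 : α ⊕ Fin 4) ∈ X <;>
    by_cases m2 : (Sum.inr 2 : α ⊕ Fin 4) ∈ X <;>
    by_cases m3 : (Sum.inr 3 : α ⊕ Fin 4) ∈ X <;>
      (simp [m0, m1, m2, m3, Nat.odd_iff, Nat.even_iff] at he ⊢ <;> omega)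
  obtain ⟨J, _, hdeg, h0, h1, h2, h3⟩ := gadget _ _ _ _ hpar
  have hfin : ∀ i : Fin 4, i = 0 ∨ i = 1 ∨ i = 2 ∨ i = 3 := by decide
  refine ⟨bigH X J, ⟨bigH_le F X J, ?_⟩, ?_⟩
  · rintro (a | i)
    · by_cases h : Sum.inl a ∈ X
      · rw [edeg_inl_mem _ _ _ h]
      · rw [edeg_inl_not_mem _ _ _ h]; omega
    · rcases hfin i with rfl | rfl | rfl | rfl
      · rw [edeg_inr0]; have := hdeg 0; omega
      · rw [edeg_inr1]; have := hdeg 1; omega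
      · rw [edeg_inr2]; exact hdeg 2
      · rw [edeg_inr3]; exact hdeg 3
  · rintro (a | i)
    · by_cases h : Sum.inl a ∈ X
      · rw [edeg_inl_mem _ _ _ h]; simpa using h
      · rw [edeg_inl_not_mem _ _ _ h]; simpa [Nat.odd_iff] using h
    · have hoe : ∀ n : ℕ, Even n ↔ ¬ Odd n := fun n => Nat.not_odd_iff_even.symm
      rcases hfin i with rfl | rfl | rfl | rfl
      · rw [edeg_inr0, Nat.odd_add, hoe (J.degree 0)]
        exact iff_helper _ _ _ h0
      · rw [edeg_inr1, ← hn1, Nat.odd_add, hoe (J.degree 1)]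
        exact iff_helper _ _ _ h1
      · rw [edeg_inr2]; exact h2
      · rw [edeg_inr3]; exact h3
end

def transfer {V W : Type*} (e : V ≃ W) (G : SimpleGraph V) : SimpleGraph W where
  Adj x y := G.Adj (e.symm x) (e.symm y)
  symm := ⟨fun _ _ h => G.adj_symm h⟩
  loopless := ⟨fun _ h => G.loopless.irrefl _ h⟩

lemma edeg_transfer {V W : Type*} (e : V ≃ W) (H : SimpleGraph V) (x : W) :
    edeg (transfer e H) x = edeg H (e.symm x) := by
  have hns : (transfer e H).neighborSet x = e '' (H.neighborSet (e.symm x)) := by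
    ext w
    constructor
    · intro h; exact ⟨e.symm w, h, by simp⟩
    · rintro ⟨u, hu, rfl⟩; simpa [transfer, SimpleGraph.neighborSet] using hu
  rw [edeg, hns, Set.ncard_image_of_injective _ e.injective, edeg]

lemma transfer_strong {V W : Type*} (e : V ≃ W) (G : SimpleGraph V)
    (h : StrongParity G) : StrongParity (transfer e G) := by
  intro X' hX'
  have hpre : e ⁻¹' X' = e.symm '' X' := by
    rw [Equiv.image_eq_preimage_symm]; simp
  have hnc : (e ⁻¹' X').ncard = X'.ncard := by
    rw [hpre, Set.ncard_image_of_injective _ e.symm.injective]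
  obtain ⟨H, ⟨hle, hdeg⟩, hpar⟩ := h (e ⁻¹' X') (by rwa [hnc])
  refine ⟨transfer e H, ⟨fun x y hxy => hle hxy, fun x => ?_⟩, fun x => ?_⟩
  · rw [edeg_transfer]; exact hdeg _
  · rw [edeg_transfer]
    rw [hpar (e.symm x)]
    simp

theorem no_forbidden_induced_subgraph_characterization
    {α : Type*} [Fintype α] (F : SimpleGraph α) :
    ∃ (n : ℕ) (G : SimpleGraph (Fin n)) (_ : F ↪g G), StrongParity G := by
  classical
  let e : (α ⊕ Fin 4) ≃ Fin (Fintype.card (α ⊕ Fin 4)) := Fintype.equivFin _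
  refine ⟨_, transfer e (bigG F), ?_, transfer_strong e (bigG F) (strong_bigG F)⟩
  exact
    { toFun := fun a => e (Sum.inl a)
      inj' := fun a b h => Sum.inl_injective (e.injective h)
      map_rel_iff' := by
        intro a b
        show (transfer e (bigG F)).Adj _ _ ↔ _
        show (bigG F).Adj (e.symm (e (Sum.inl a))) (e.symm (e (Sum.inl b))) ↔ _
        rw [Equiv.symm_apply_apply, Equiv.symm_apply_apply]
        exact Iff.rfl }
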